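/- arXiv:1906.09477 — 5 statements merged into one kernel-verified Lean document; each statement's English description precedes it below -/
import Mathlib

section
/- Let u(x) = (1/2)·x·(3 − x²) and let uₙ denote the n-fold composition of u with itself. Then for every x ∈ [−1, 1] and every n ≥ 1, |uₙ(x) − sgn(x)| ≤ |sgn(x) − x|^(2^(n/2)). -/
private lemma u_step (x : ℝ) (hx : x ∈ Set.Icc (0:ℝ) 1) :
    1 - x * (3 - x ^ 2) / 2 ≤ (1 - x) ^ (3/2 : ℝ) := by
  obtain ⟨hx0, hx1⟩ := hx
  have hy : (0:ℝ) ≤ 1 - x := by linarith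
  set s := Real.sqrt (1 - x) with hs
  have hs0 : 0 ≤ s := Real.sqrt_nonneg _
  have hs2 : s ^ 2 = 1 - x := Real.sq_sqrt hy
  have h32 : (1 - x : ℝ) ^ (3/2 : ℝ) = s ^ 3 := by
    rw [show (3/2:ℝ) = (1/2) * ((3:ℕ):ℝ) by norm_num, Real.rpow_mul hy,
      Real.rpow_natCast, hs, Real.sqrt_eq_rpow]
  rw [h32]
  have hx' : x = 1 - s ^ 2 := by linarith
  have key : 1 - x * (3 - x ^ 2) / 2 = s ^ 4 * (3 - s ^ 2) / 2 := by
    rw [hx']; ring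
  rw [key]
  nlinarith [mul_nonneg (mul_nonneg (pow_nonneg hs0 3) (sq_nonneg (s - 1)))
    (by linarith : (0:ℝ) ≤ s + 2)]

private lemma iterKey (n : ℕ) : ∀ x ∈ Set.Icc (0:ℝ) 1,
    (fun y : ℝ => y * (3 - y ^ 2) / 2)^[n] x ∈ Set.Icc (0:ℝ) 1 ∧
    1 - (fun y : ℝ => y * (3 - y ^ 2) / 2)^[n] x ≤ (1 - x) ^ ((3/2 : ℝ) ^ n) := by
  induction n with
  | zero =>
    intro x hx
    simpa [Real.rpow_one] using hx
  | succ n ih =>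
    intro x hx
    obtain ⟨⟨hz0, hz1⟩, hzb⟩ := ih x hx
    set z := (fun y : ℝ => y * (3 - y ^ 2) / 2)^[n] x with hzdef
    rw [Function.iterate_succ_apply']
    constructor
    · constructor
      · show (0:ℝ) ≤ z * (3 - z ^ 2) / 2
        nlinarith
      · show z * (3 - z ^ 2) / 2 ≤ 1
        nlinarith [mul_nonneg (sq_nonneg (z - 1)) (by linarith : (0:ℝ) ≤ z + 2)]
    · have h1 : 1 - z * (3 - z ^ 2) / 2 ≤ (1 - z) ^ (3/2 : ℝ) :=
        u_step z ⟨hz0, hz1⟩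
      have h2 : (1 - z) ^ (3/2:ℝ) ≤ ((1 - x) ^ ((3/2:ℝ)^n)) ^ (3/2:ℝ) :=
        Real.rpow_le_rpow (by linarith) hzb (by norm_num)
      have h3 : ((1 - x) ^ ((3/2:ℝ)^n)) ^ (3/2:ℝ) = (1 - x) ^ ((3/2:ℝ)^(n+1)) := by
        rw [← Real.rpow_natCast]
        rw [← Real.rpow_mul (by linarith [hx.2] : (0:ℝ) ≤ 1 - x), pow_succ]
        norm_num
      calc 1 - z * (3 - z ^ 2) / 2 ≤ (1 - z) ^ (3/2:ℝ) := h1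
        _ ≤ ((1 - x) ^ ((3/2:ℝ)^n)) ^ (3/2:ℝ) := h2
        _ = (1 - x) ^ ((3/2:ℝ)^(n+1)) := h3

private lemma iterOdd (n : ℕ) (x : ℝ) :
    (fun y : ℝ => y * (3 - y ^ 2) / 2)^[n] (-x)
      = - (fun y : ℝ => y * (3 - y ^ 2) / 2)^[n] x := by
  induction n with
  | zero => simp
  | succ n ih =>
    rw [Function.iterate_succ_apply', Function.iterate_succ_apply', ih]
    ring

private lemma expCmp (n : ℕ) : (2:ℝ) ^ ((n:ℝ)/2) ≤ (3/2 : ℝ) ^ n := by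
  have h1 : (2:ℝ) ^ ((n:ℝ)/2) = (Real.sqrt 2) ^ n := by
    rw [Real.sqrt_eq_rpow, ← Real.rpow_natCast ((2:ℝ) ^ ((1:ℝ)/2)) n,
      ← Real.rpow_mul (by norm_num)]
    ring_nf
  rw [h1]
  have hsqrt : Real.sqrt 2 ≤ 3/2 := by
    nlinarith [Real.sq_sqrt (by norm_num : (0:ℝ) ≤ 2), Real.sqrt_nonneg 2]
  exact pow_le_pow_left₀ (Real.sqrt_nonneg 2) hsqrt n

private lemma mainKey (n : ℕ) (x : ℝ) (hx : x ∈ Set.Icc (0:ℝ) 1) :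
    1 - (fun y : ℝ => y * (3 - y ^ 2) / 2)^[n] x
      ≤ (1 - x) ^ ((2:ℝ) ^ ((n:ℝ)/2)) := by
  rcases eq_or_lt_of_le hx.2 with h1 | h1
  · have hfix : (fun y : ℝ => y * (3 - y ^ 2) / 2)^[n] x = x := by
      rw [h1]; exact Function.iterate_fixed (by norm_num) n
    rw [hfix, h1]
    simpa using Real.rpow_nonneg (by norm_num : (0:ℝ) ≤ 1 - 1) _
  · have hb := (iterKey n x hx).2
    have hc : (1 - x) ^ ((3/2:ℝ)^n) ≤ (1 - x) ^ ((2:ℝ)^((n:ℝ)/2)) :=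
      Real.rpow_le_rpow_of_exponent_ge (by linarith) (by linarith [hx.1]) (expCmp n)
    linarith

/-- Let u(x) = x(3 − x²)/2 and uₙ its n-fold iterate. For x ∈ [−1,1], n ≥ 1:
|uₙ(x) − sgn(x)| ≤ |sgn(x) − x|^(2^(n/2)). -/
theorem stmt0 (n : ℕ) (hn : 1 ≤ n) (x : ℝ) (hx : x ∈ Set.Icc (-1 : ℝ) 1) :
    |(fun y : ℝ => y * (3 - y ^ 2) / 2)^[n] x - Real.sign x| ≤
      |Real.sign x - x| ^ ((2 : ℝ) ^ ((n : ℝ) / 2)) := by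
  obtain ⟨hx1, hx2⟩ := hx
  rcases lt_trichotomy x 0 with hneg | h0 | hpos
  · rw [Real.sign_of_neg hneg]
    have hw : -x ∈ Set.Icc (0:ℝ) 1 := ⟨by linarith, by linarith⟩
    have hmem := (iterKey n (-x) hw).1
    have hle := mainKey n (-x) hw
    have hox : (fun y : ℝ => y * (3 - y ^ 2) / 2)^[n] x
        = - (fun y : ℝ => y * (3 - y ^ 2) / 2)^[n] (-x) := by
      rw [← iterOdd n (-x), neg_neg]
    rw [hox]
    have heq : -(fun y : ℝ => y * (3 - y ^ 2) / 2)^[n] (-x) - (-1)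
        = 1 - (fun y : ℝ => y * (3 - y ^ 2) / 2)^[n] (-x) := by ring
    have habs1 : |-(fun y : ℝ => y * (3 - y ^ 2) / 2)^[n] (-x) - (-1)|
        = 1 - (fun y : ℝ => y * (3 - y ^ 2) / 2)^[n] (-x) := by
      rw [heq, abs_of_nonneg (by linarith [hmem.2])]
    have habs2 : |(-1 : ℝ) - x| = 1 - (-x) := by
      rw [abs_of_nonpos (by linarith)]
      ring
    rw [habs1, habs2]
    exact hle
  · subst h0
    rw [Real.sign_zero]
    have hfix : (fun y : ℝ => y * (3 - y ^ 2) / 2)^[n] (0:ℝ) = 0 :=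
      Function.iterate_fixed (by norm_num) n
    rw [hfix]
    simpa using Real.rpow_nonneg (abs_nonneg (0 - (0:ℝ))) _
  · rw [Real.sign_of_pos hpos]
    have hw : x ∈ Set.Icc (0:ℝ) 1 := ⟨by linarith, hx2⟩
    have hmem := (iterKey n x hw).1
    have hle := mainKey n x hw
    have habs1 : |(fun y : ℝ => y * (3 - y ^ 2) / 2)^[n] x - 1|
        = 1 - (fun y : ℝ => y * (3 - y ^ 2) / 2)^[n] x := by
      rw [abs_of_nonpos (by linarith [hmem.2])]
      ring
    have habs2 : |(1 : ℝ) - x| = 1 - x := abs_of_nonneg (by linarith)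
    rw [habs1, habs2]
    exact hle
end

section
/- Let ũ(y) = (1/2)·y²·(3 − y). Then for all y ∈ [0, 1], ũ(y) ≤ y^√2. -/
/-- Let ũ(y) = y²(3 − y)/2. Then for all y ∈ [0,1], ũ(y) ≤ y^√2. -/
theorem stmt1 (y : ℝ) (hy : y ∈ Set.Icc (0 : ℝ) 1) :
    y ^ 2 * (3 - y) / 2 ≤ y ^ Real.sqrt 2 := by
  obtain ⟨h0, h1⟩ := hy
  rcases eq_or_lt_of_le h0 with h | hpos
  · rw [← h, Real.zero_rpow (by positivity)]
    norm_num
  have hsqrt2 : Real.sqrt 2 ≤ 3 / 2 := by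
    nlinarith [Real.sq_sqrt (by norm_num : (2:ℝ) ≥ 0), Real.sqrt_nonneg 2]
  have h32 : y ^ ((3:ℝ)/2) ≤ y ^ Real.sqrt 2 :=
    Real.rpow_le_rpow_of_exponent_ge hpos h1 hsqrt2
  refine le_trans ?_ h32
  set s := Real.sqrt y with hs
  have hsy : s ^ 2 = y := Real.sq_sqrt h0
  have hsnn : 0 ≤ s := Real.sqrt_nonneg y
  have hrw : y ^ ((3:ℝ)/2) = s ^ 3 := by
    rw [hs, Real.sqrt_eq_rpow, ← Real.rpow_natCast (y ^ ((1:ℝ)/2)) 3,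
      ← Real.rpow_mul h0]
    norm_num
  rw [hrw, ← hsy]
  nlinarith [mul_nonneg (mul_nonneg (pow_nonneg hsnn 3) (sq_nonneg (s - 1))) (by linarith : (0:ℝ) ≤ s + 2)]
end

section
/- Let u(x) = (1/2)·x·(3 − x²) and uₙ its n-fold iterate. Then for every x ∈ [−1, 1] and every n ≥ 1, |x·uₙ(x) − |x|| ≤ 2^(−n/2). -/
private noncomputable def uu : ℝ → ℝ := fun y : ℝ => y * (3 - y ^ 2) / 2

private lemma uu_mem {y : ℝ} (h0 : 0 ≤ y) (h1 : y ≤ 1) : 0 ≤ uu y ∧ uu y ≤ 1 := by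
  unfold uu
  constructor
  · nlinarith
  · nlinarith [sq_nonneg (1 - y)]

private lemma uu_iter_mem {x : ℝ} (h0 : 0 ≤ x) (h1 : x ≤ 1) (n : ℕ) :
    0 ≤ uu^[n] x ∧ uu^[n] x ≤ 1 := by
  induction n with
  | zero => exact ⟨h0, h1⟩
  | succ n ih =>
    rw [Function.iterate_succ_apply']
    exact uu_mem ih.1 ih.2

private lemma uu_odd (y : ℝ) : uu (-y) = - uu y := by
  simp [uu]; ring

private lemma uu_iter_odd (y : ℝ) (n : ℕ) : uu^[n] (-y) = - uu^[n] y := by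
  induction n with
  | zero => rfl
  | succ n ih => rw [Function.iterate_succ_apply', Function.iterate_succ_apply', ih, uu_odd]

private lemma key_step {y c : ℝ} (h0 : 0 ≤ y) (h1 : y ≤ 1) (hc : c * c = 1/2) (hc0 : 0 ≤ c) :
    (1 - y) * (y + 2) ≤ c * (3 - y ^ 2) := by
  nlinarith [sq_nonneg (c - 1/2), sq_nonneg y, mul_nonneg hc0 h0, sq_nonneg (1 - y),
    mul_nonneg (mul_nonneg hc0 h0) h0, sq_nonneg (c*y - y)]

private lemma key {x : ℝ} (h0 : 0 ≤ x) (h1 : x ≤ 1) (n : ℕ) :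
    x * (1 - uu^[n] x) ≤ (2 : ℝ) ^ (-(n : ℝ) / 2) * uu^[n] x := by
  induction n with
  | zero =>
    simp only [Function.iterate_zero_apply, Nat.cast_zero, neg_zero, zero_div, Real.rpow_zero,
      one_mul]
    nlinarith
  | succ n ih =>
    have hy := uu_iter_mem h0 h1 n
    set y := uu^[n] x with hy_def
    set s : ℝ := (2 : ℝ) ^ (-(n : ℝ) / 2) with hs_def
    have hs0 : 0 ≤ s := le_of_lt (Real.rpow_pos_of_pos (by norm_num) _)
    set c : ℝ := (2 : ℝ) ^ (-(1 : ℝ) / 2) with hc_def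
    have hc0 : 0 ≤ c := le_of_lt (Real.rpow_pos_of_pos (by norm_num) _)
    have hcc : c * c = 1/2 := by
      rw [hc_def, ← Real.rpow_add (by norm_num : (0:ℝ) < 2)]
      norm_num
    have hsucc : (2 : ℝ) ^ (-((n : ℝ) + 1) / 2) = s * c := by
      rw [hs_def, hc_def, ← Real.rpow_add (by norm_num : (0:ℝ) < 2)]
      ring_nf
    rw [Function.iterate_succ_apply']
    push_cast
    rw [hsucc]
    have halg : 1 - uu y = (1 - y)^2 * (y + 2) / 2 := by unfold uu; ring
    have huy : uu y = y * (3 - y^2) / 2 := rfl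
    rw [halg, huy]
    have step := key_step hy.1 hy.2 hcc hc0
    -- x * ((1-y)^2 * (y+2) / 2) = (x * (1-y)) * ((1-y)*(y+2)/2)
    have h1y : 0 ≤ 1 - y := by linarith [hy.2]
    have h2y : 0 ≤ (1 - y) * (y + 2) / 2 := by nlinarith
    have e1 : x * ((1 - y)^2 * (y + 2) / 2)
        = (x * (1 - y)) * ((1 - y) * (y + 2) / 2) := by ring
    rw [e1]
    calc (x * (1 - y)) * ((1 - y) * (y + 2) / 2)
        ≤ (s * y) * ((1 - y) * (y + 2) / 2) := mul_le_mul_of_nonneg_right ih h2y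
      _ ≤ (s * y) * (c * (3 - y^2) / 2) := by
          apply mul_le_mul_of_nonneg_left _ (mul_nonneg hs0 hy.1)
          linarith
      _ = s * c * (y * (3 - y^2) / 2) := by ring

private lemma main_nonneg {x : ℝ} (h0 : 0 ≤ x) (h1 : x ≤ 1) (n : ℕ) :
    abs (x * uu^[n] x - |x|) ≤ (2 : ℝ) ^ (-(n : ℝ) / 2) := by
  have hy := uu_iter_mem h0 h1 n
  rw [abs_of_nonneg h0]
  have : x * uu^[n] x - x = -(x * (1 - uu^[n] x)) := by ring
  rw [this, abs_neg, abs_of_nonneg (by nlinarith [hy.2] : 0 ≤ x * (1 - uu^[n] x))]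
  calc x * (1 - uu^[n] x) ≤ (2 : ℝ) ^ (-(n : ℝ) / 2) * uu^[n] x := key h0 h1 n
    _ ≤ (2 : ℝ) ^ (-(n : ℝ) / 2) * 1 := by
        apply mul_le_mul_of_nonneg_left hy.2 (le_of_lt (Real.rpow_pos_of_pos (by norm_num) _))
    _ = (2 : ℝ) ^ (-(n : ℝ) / 2) := mul_one _

/-- Let u(x) = x(3 − x²)/2 and uₙ its n-fold iterate. For every x ∈ [−1,1] and n ≥ 1:
|x·uₙ(x) − |x|| ≤ 2^(−n/2). -/
theorem stmt3 (n : ℕ) (hn : 1 ≤ n) (x : ℝ) (hx : x ∈ Set.Icc (-1 : ℝ) 1) :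
    abs (x * (fun y : ℝ => y * (3 - y ^ 2) / 2)^[n] x - |x|) ≤
      (2 : ℝ) ^ (-(n : ℝ) / 2) := by
  obtain ⟨hl, hr⟩ := hx
  have hfun : (fun y : ℝ => y * (3 - y ^ 2) / 2) = uu := rfl
  rw [hfun]
  rcases le_or_gt 0 x with h | h
  · exact main_nonneg h hr n
  · have h0 : 0 ≤ -x := by linarith
    have h1 : -x ≤ 1 := by linarith
    have := main_nonneg h0 h1 n
    rwa [uu_iter_odd, abs_neg, mul_neg, neg_mul, neg_neg] at this
end

section
/- Let v(x) = 2 − 3x², I₀ = [1/2, 1], I₁ = [−1, −1/2]. For any binary sequence b₁, …, bₙ ∈ {0,1} there exists a closed interval I ⊂ [−1, 1] of length at least 6^(−n) such that for every initial value w₁ ∈ I, the sequence defined by w_k = v(w_{k−1}) satisfies w_k ∈ I_{b_k} for all k = 1, …, n. -/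
/-- Bit extraction via the polynomial dynamical system v(x) = 2 − 3x². For any binary
sequence b₁,…,bₙ there is an interval I ⊆ [−1,1] of length ≥ 6^(−n) such that for any
initial value w₁ ∈ I, the iterates w_k = v(w_{k−1}) satisfy w_k ∈ I_{b_k} for k = 1,…,n. -/
theorem stmt4 (n : ℕ) (b : ℕ → Bool) :
    ∃ p q : ℝ, Set.Icc p q ⊆ Set.Icc (-1 : ℝ) 1 ∧ (6 : ℝ) ^ (-(n : ℤ)) ≤ q - p ∧
      ∀ w₁ ∈ Set.Icc p q, ∀ k, 1 ≤ k → k ≤ n →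
        (fun x : ℝ => 2 - 3 * x ^ 2)^[k - 1] w₁ ∈
          (if b k then Set.Icc (-1 : ℝ) (-1/2) else Set.Icc (1/2 : ℝ) 1) := by
  induction n generalizing b with
  | zero =>
    exact ⟨-1, 1, subset_rfl, by norm_num, fun w hw k hk1 hk0 => absurd (hk1.trans hk0) (by omega)⟩
  | succ n ih =>
    obtain ⟨c, d, hsub, hlen, hit⟩ := ih (fun k => b (k + 1))
    have hpos : (0:ℝ) < 6 ^ (-(n:ℤ)) := by positivity
    have hcd : c < d := by linarith
    have hc1 : -1 ≤ c := (hsub ⟨le_refl c, hcd.le⟩).1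
    have hd1 : d ≤ 1 := (hsub ⟨hcd.le, le_refl d⟩).2
    set f : ℝ → ℝ := (fun x : ℝ => 2 - 3 * x ^ 2) with hf
    set sc := Real.sqrt ((2 - c)/3) with hsc
    set sd := Real.sqrt ((2 - d)/3) with hsd
    have hscn : 0 ≤ sc := Real.sqrt_nonneg _
    have hsdn : 0 ≤ sd := Real.sqrt_nonneg _
    have hsc2 : sc ^ 2 = (2 - c)/3 := Real.sq_sqrt (by linarith)
    have hsd2 : sd ^ 2 = (2 - d)/3 := Real.sq_sqrt (by linarith)
    have hscle : sc ≤ 1 := by nlinarith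
    have hsdge : 1/2 ≤ sd := by nlinarith
    have hsdsc : sd ≤ sc := by nlinarith
    have hgap : (d - c)/6 ≤ sc - sd := by nlinarith
    have hlen' : (6:ℝ) ^ (-((n+1:ℕ):ℤ)) ≤ (d - c)/6 := by
      have h6 : (6:ℝ) ^ (-((n+1:ℕ):ℤ)) = 6 ^ (-(n:ℤ)) / 6 := by
        push_cast
        rw [neg_add, zpow_add₀ (by norm_num : (6:ℝ) ≠ 0)]
        norm_num
        ring
      rw [h6]; linarith
    have hmap : ∀ w : ℝ, sd ≤ w → w ≤ sc → f w ∈ Set.Icc c d := by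
      intro w h1 h2
      constructor <;> simp only [hf] <;> nlinarith
    have key : ∀ p q : ℝ, (∀ w ∈ Set.Icc p q, f w ∈ Set.Icc c d) →
        (∀ w ∈ Set.Icc p q,
          w ∈ (if b 1 then Set.Icc (-1:ℝ) (-1/2) else Set.Icc (1/2:ℝ) 1)) →
        (∀ w ∈ Set.Icc p q, ∀ k, 1 ≤ k → k ≤ n + 1 →
          f^[k-1] w ∈ (if b k then Set.Icc (-1:ℝ) (-1/2) else Set.Icc (1/2:ℝ) 1)) := by
      intro p q hmapw hfirst w hw k hk1 hkn
      rcases Nat.eq_or_lt_of_le hk1 with h | h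
      · rw [← h]; simpa using hfirst w hw
      · have hk2 : 2 ≤ k := h
        have he : k - 1 = (k - 2) + 1 := by omega
        rw [he, Function.iterate_succ_apply]
        have h2 := hit (f w) (hmapw w hw) (k-1) (by omega) (by omega)
        have hkk : (k-1) - 1 = k - 2 := by omega
        have hbb : (k-1)+1 = k := by omega
        rw [hkk, hbb] at h2
        exact h2
    cases hb1 : b 1 with
    | false =>
      refine ⟨sd, sc, ?_, by linarith, key sd sc (fun w hw => hmap w hw.1 hw.2) ?_⟩
      · intro w hw; exact ⟨by linarith [hw.1], by linarith [hw.2]⟩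
      · intro w hw; rw [hb1]
        simp only [if_false, Bool.false_eq_true]
        exact ⟨by linarith [hw.1], by linarith [hw.2]⟩
    | true =>
      refine ⟨-sc, -sd, ?_, by linarith, key (-sc) (-sd) ?_ ?_⟩
      · intro w hw; exact ⟨by linarith [hw.1], by linarith [hw.2]⟩
      · intro w hw
        have h := hmap (-w) (by linarith [hw.2]) (by linarith [hw.1])
        have : f (-w) = f w := by simp only [hf]; ring
        rwa [this] at h
      · intro w hw; rw [hb1]
        simp only [if_true]
        exact ⟨by linarith [hw.1], by linarith [hw.2]⟩
end

section
/- Let σ : ℝ → ℝ be 2-periodic, Lipschitz with constant c_σ, with max σ = 1, min σ = −1. Fix a > 0 and let w*₁, …, w*_R ∈ [−1,1]. Then there exists w′₁ ∈ [−1,1] such that the sequence defined by w′_k = σ(a·w′_{k−1}) for k ≥ 2 satisfies |w*_k − w′_k| < 2/a for all k = 1, …, R. -/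
/-- Generating R prescribed values (up to 2/a) by iterating w ↦ σ(a·w) from a single
initial weight, where σ is 2-periodic, Lipschitz, with max σ = 1 and min σ = −1. -/
theorem stmt8 (σ : ℝ → ℝ) (cσ : ℝ)
    (hper : ∀ x, σ (x + 2) = σ x)
    (hlip : ∀ x y, |σ x - σ y| ≤ cσ * |x - y|)
    (hub : ∀ x, σ x ≤ 1) (hmax : ∃ x, σ x = 1)
    (hlb : ∀ x, -1 ≤ σ x) (hmin : ∃ x, σ x = -1)
    (a : ℝ) (ha : 0 < a) (R : ℕ) (wstar : ℕ → ℝ)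
    (hw : ∀ k, 1 ≤ k → k ≤ R → wstar k ∈ Set.Icc (-1 : ℝ) 1) :
    ∃ w₁ ∈ Set.Icc (-1 : ℝ) 1, ∀ k, 1 ≤ k → k ≤ R →
      |wstar k - (fun t : ℝ => σ (a * t))^[k - 1] w₁| < 2 / a := by
  -- σ is continuous (Lipschitz)
  have hcont : Continuous σ := by
    have : LipschitzWith (Real.toNNReal cσ) σ := by
      apply LipschitzWith.of_dist_le_mul
      intro x y
      calc dist (σ x) (σ y) = |σ x - σ y| := Real.dist_eq _ _
        _ ≤ cσ * |x - y| := hlip x y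
        _ ≤ (Real.toNNReal cσ) * |x - y| := by
            apply mul_le_mul_of_nonneg_right (Real.le_coe_toNNReal cσ) (abs_nonneg _)
        _ = (Real.toNNReal cσ) * dist x y := by rw [Real.dist_eq]
    exact this.continuous
  -- σ attains every value in [-1, 1]
  have hattain : ∀ v : ℝ, -1 ≤ v → v ≤ 1 → ∃ s, σ s = v := by
    intro v hv1 hv2
    obtain ⟨x0, hx0⟩ := hmin
    obtain ⟨x1, hx1⟩ := hmax
    have hsub := intermediate_value_uIcc (a := x0) (b := x1) hcont.continuousOn
    have hvmem : v ∈ Set.uIcc (σ x0) (σ x1) := by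
      rw [hx0, hx1, Set.uIcc_of_le (by norm_num : (-1:ℝ) ≤ 1)]
      exact ⟨hv1, hv2⟩
    obtain ⟨s, _, hs⟩ := hsub hvmem
    exact ⟨s, hs⟩
  have hper : Function.Periodic σ 2 := hper
  -- key lemma: any value attained on any half-open interval of length 2/a
  have hA : ∀ (v c : ℝ), -1 ≤ v → v ≤ 1 →
      ∃ t, c ≤ t ∧ t < c + 2 / a ∧ σ (a * t) = v := by
    intro v c hv1 hv2
    obtain ⟨s, hs⟩ := hattain v hv1 hv2
    set n : ℤ := ⌈(a * c - s) / 2⌉ with hn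
    refine ⟨(s + 2 * n) / a, ?_, ?_, ?_⟩
    · rw [le_div_iff₀ ha]
      have := Int.le_ceil ((a * c - s) / 2)
      nlinarith [this]
    · rw [div_lt_iff₀ ha]
      have := Int.ceil_lt_add_one ((a * c - s) / 2)
      have h2a : a * (c + 2 / a) = a * c + 2 := by field_simp
      nlinarith [this, h2a]
    · have hat : a * ((s + 2 * n) / a) = s + n • (2:ℝ) := by
        field_simp
        push_cast
        ring
      rw [hat, (hper.zsmul n) s, hs]
  -- variant: other half-open side
  have hA' : ∀ (v c : ℝ), -1 ≤ v → v ≤ 1 →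
      ∃ t, c < t ∧ t ≤ c + 2 / a ∧ σ (a * t) = v := by
    intro v c hv1 hv2
    obtain ⟨t, ht1, ht2, ht3⟩ := hA v c hv1 hv2
    rcases eq_or_lt_of_le ht1 with h | h
    · have hpos : 0 < 2 / a := by positivity
      refine ⟨c + 2 / a, by linarith, le_refl _, ?_⟩
      have h2a : a * (c + 2 / a) = a * c + 2 := by field_simp
      rw [h2a, hper (a * c), h]
      exact ht3
    · exact ⟨t, h, ht2.le, ht3⟩
  rcases lt_or_ge a 1 with hal | hal
  · -- trivial case a < 1 : everything is within 2 < 2/a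
    have hiter : ∀ n, -1 ≤ (fun t : ℝ => σ (a * t))^[n] 0 ∧
        (fun t : ℝ => σ (a * t))^[n] 0 ≤ 1 := by
      intro n
      cases n with
      | zero => norm_num
      | succ m =>
        rw [Function.iterate_succ_apply']
        exact ⟨hlb _, hub _⟩
    refine ⟨0, by norm_num, ?_⟩
    intro k hk1 hk2
    obtain ⟨h1, h2⟩ := hw k hk1 hk2
    obtain ⟨h3, h4⟩ := hiter (k - 1)
    have h22 : (2:ℝ) < 2 / a := by
      rw [lt_div_iff₀ ha]; nlinarith
    rw [abs_sub_lt_iff]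
    constructor <;> nlinarith
  · -- main case a ≥ 1 : induction on R
    have h1a : 1 / a ≤ 1 := by rw [div_le_iff₀ ha]; nlinarith
    have h2a : 2 / a ≤ 2 := by rw [div_le_iff₀ ha]; nlinarith
    have h1pos : 0 < 1 / a := by positivity
    have h12 : 1 / a < 2 / a := by
      rw [div_lt_div_iff₀ ha ha]; nlinarith
    have hsum : 2 / a = 1 / a + 1 / a := by ring
    induction R generalizing wstar with
    | zero =>
      exact ⟨0, by norm_num, fun k hk1 hk2 => by omega⟩
    | succ R ih =>
      obtain ⟨wt, hwtmem, hwt⟩ := ih (fun k => wstar (k + 1))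
        (fun k hk1 hk2 => hw (k + 1) (by omega) (by omega))
      obtain ⟨hv1, hv2⟩ := hwtmem
      obtain ⟨hm1, hm2⟩ := hw 1 le_rfl (by omega)
      have main : ∀ t : ℝ, σ (a * t) = wt → -1 ≤ t → t ≤ 1 →
          |wstar 1 - t| < 2 / a →
          ∃ w₁ ∈ Set.Icc (-1 : ℝ) 1, ∀ k, 1 ≤ k → k ≤ R + 1 →
            |wstar k - (fun t : ℝ => σ (a * t))^[k - 1] w₁| < 2 / a := by
        intro t htv ht1 ht2 htd
        refine ⟨t, ⟨ht1, ht2⟩, ?_⟩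
        intro k hk1 hk2
        rcases Nat.lt_or_ge k 2 with hk | hk
        · have : k = 1 := by omega
          subst this
          simpa using htd
        · obtain ⟨j, rfl⟩ : ∃ j, k = j + 2 := ⟨k - 2, by omega⟩
          have hit : (fun t : ℝ => σ (a * t))^[j + 2 - 1] t
              = (fun t : ℝ => σ (a * t))^[j] wt := by
            have : j + 2 - 1 = j + 1 := by omega
            rw [this, Function.iterate_succ_apply]
            simp only [htv]
          rw [hit]
          have := hwt (j + 1) (by omega) (by omega)
          simpa using this
      by_cases hc : wstar 1 ≤ 1 - 1 / a
      · set c : ℝ := max (-1) (wstar 1 - 1 / a) with hcdef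
        obtain ⟨t, ht1, ht2, ht3⟩ := hA wt c hv1 hv2
        have hcle : c ≤ wstar 1 := max_le (by linarith) (by linarith)
        have hcge : wstar 1 - 1 / a ≤ c := le_max_right _ _
        have hcub : c ≤ 1 - 2 / a := max_le (by linarith) (by linarith [hsum])
        have hcm1 : (-1 : ℝ) ≤ c := le_max_left _ _
        apply main t ht3 (by linarith) (by linarith)
        rw [abs_sub_lt_iff]
        constructor <;> nlinarith
      · push_neg at hc
        obtain ⟨t, ht1, ht2, ht3⟩ := hA' wt (1 - 2 / a) hv1 hv2
        have hte : (1 : ℝ) - 2 / a + 2 / a = 1 := by ring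
        rw [hte] at ht2
        apply main t ht3 (by linarith) ht2
        rw [abs_sub_lt_iff]
        constructor <;> nlinarith
end
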